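/- arXiv:1803.09953 — 8 statements merged into one kernel-verified Lean document; each statement's English description precedes it below -/
import Mathlib

section
/- Let h > 0 and α, β be real numbers with β ≠ 0. Then the set of complex solutions s of the characteristic equation s − α = β·exp(−s·h) is nonempty and possesses an element of maximal real part; that is, there exists a root s₀ with s₀ − α = β·exp(−s₀·h) such that every root s of the equation satisfies Re(s) ≤ Re(s₀). (This is the statement that the rightmost eigenvalue exists and corresponds to the principal branch W₀ of the Lambert W function.) -/
open Complex Filter Set in
theorem aux_mul_exp (x y : ℝ) (hxy : x * Real.sin y + y * Real.cos y = 0) :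
    (↑x + ↑y * I) * Complex.exp (↑x + ↑y * I)
      = ↑((x * Real.cos y - y * Real.sin y) * Real.exp x) := by
  have h2 : (x : ℂ) * Complex.sin y + (y : ℂ) * Complex.cos y = 0 := by
    rw [← Complex.ofReal_sin, ← Complex.ofReal_cos]
    exact_mod_cast congrArg (Complex.ofReal ·) hxy
  rw [Complex.exp_add, Complex.exp_mul_I]
  push_cast
  linear_combination (Complex.exp x * I) * h2 + ((y : ℂ) * Complex.sin y * Complex.exp x) * Complex.I_sq

open Complex Filter Set Topology in
theorem aux_exists_w (c : ℝ) (hc : c ≠ 0) : ∃ w : ℂ, w * Complex.exp w = (c : ℂ) := by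
  have ofreal : ∀ x : ℝ, x * Real.exp x = c → ∃ w : ℂ, w * Complex.exp w = (c : ℂ) := by
    intro x hx
    exact ⟨(x : ℂ), by rw [← Complex.ofReal_exp, ← Complex.ofReal_mul, hx]⟩
  rcases hc.lt_or_gt with hneg | hpos
  · -- c < 0
    rcases le_or_gt (-Real.exp (-1)) c with hge | hlt
    · -- real IVT on [-1, 0]
      have hcont : ContinuousOn (fun x : ℝ => x * Real.exp x) (Icc (-1) 0) :=
        (continuous_id.mul Real.continuous_exp).continuousOn
      have hmem : c ∈ Icc ((-1 : ℝ) * Real.exp (-1)) ((0 : ℝ) * Real.exp 0) := by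
        constructor <;> simp <;> linarith
      obtain ⟨x, _, hx⟩ := intermediate_value_Icc (by norm_num) hcont hmem
      exact ofreal x hx
    · -- curve case
      set g : ℝ → ℝ := fun y => -(y / Real.sin y * Real.exp (-(y * Real.cos y / Real.sin y))) with hg
      -- limit of g at 0⁺ is -exp(-1)
      have h1 : Tendsto (fun y => Real.sin y / y) (𝓝[≠] (0:ℝ)) (𝓝 1) := by
        have := hasDerivAt_iff_tendsto_slope.mp (Real.hasDerivAt_sin 0)
        simp only [slope_fun_def, Real.sin_zero, Real.cos_zero, sub_zero, vsub_eq_sub, smul_eq_mul] at this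
        exact this.congr (fun y => by rw [div_eq_inv_mul])
      have h2 : Tendsto (fun y => y / Real.sin y) (𝓝[≠] (0:ℝ)) (𝓝 1) := by
        simpa [inv_div] using h1.inv₀ one_ne_zero
      have hcos0 : Tendsto Real.cos (𝓝[≠] (0:ℝ)) (𝓝 1) := by
        simpa using (Real.continuous_cos.tendsto 0).mono_left nhdsWithin_le_nhds
      have h3 : Tendsto (fun y => y * Real.cos y / Real.sin y) (𝓝[≠] (0:ℝ)) (𝓝 1) := by
        have := h2.mul hcos0
        rw [mul_one] at this
        exact this.congr (fun y => by ring)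
      have h4 : Tendsto g (𝓝[≠] (0:ℝ)) (𝓝 (-(1 * Real.exp (-1)))) :=
        (h2.mul ((Real.continuous_exp.tendsto _).comp h3.neg)).neg
      have h4' : Tendsto g (𝓝[>] (0:ℝ)) (𝓝 (-(1 * Real.exp (-1)))) :=
        h4.mono_left (nhdsWithin_mono _ (fun y hy => ne_of_gt hy))
      have hgt : ∀ᶠ y in 𝓝[>] (0:ℝ), c < g y :=
        h4'.eventually_const_lt (by rw [one_mul]; linarith)
      have hIoo : ∀ᶠ y in 𝓝[>] (0:ℝ), y ∈ Ioo (0:ℝ) Real.pi :=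
        Ioo_mem_nhdsGT_of_mem ⟨le_refl 0, Real.pi_pos⟩
      obtain ⟨y₁, hy₁c, hy₁mem⟩ := (hgt.and hIoo).exists
      -- limit of g at π⁻ is -∞
      have hs0 : Tendsto Real.sin (𝓝[<] Real.pi) (𝓝[>] (0:ℝ)) := by
        rw [tendsto_nhdsWithin_iff]
        constructor
        · simpa using (Real.continuous_sin.tendsto Real.pi).mono_left nhdsWithin_le_nhds
        · filter_upwards [Ioo_mem_nhdsLT_of_mem (⟨Real.pi_pos, le_refl _⟩ : Real.pi ∈ Ioc 0 Real.pi)] with y hy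
          exact Real.sin_pos_of_pos_of_lt_pi hy.1 hy.2
      have hinv : Tendsto (fun y => (Real.sin y)⁻¹) (𝓝[<] Real.pi) atTop :=
        tendsto_inv_nhdsGT_zero.comp hs0
      have hidpi : Tendsto (fun y : ℝ => y) (𝓝[<] Real.pi) (𝓝 Real.pi) :=
        tendsto_id.mono_left nhdsWithin_le_nhds
      have hA : Tendsto (fun y => y / Real.sin y) (𝓝[<] Real.pi) atTop := by
        have := hidpi.pos_mul_atTop Real.pi_pos hinv
        exact this.congr (fun y => by rw [div_eq_mul_inv])
      have hcosπ : Tendsto (fun y => y * (-Real.cos y)) (𝓝[<] Real.pi) (𝓝 (Real.pi * 1)) := by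
        apply hidpi.mul
        have : Tendsto Real.cos (𝓝[<] Real.pi) (𝓝 (-1)) := by
          simpa using (Real.continuous_cos.tendsto Real.pi).mono_left nhdsWithin_le_nhds
        simpa using this.neg
      have hB : Tendsto (fun y => -(y * Real.cos y / Real.sin y)) (𝓝[<] Real.pi) atTop := by
        have := hcosπ.pos_mul_atTop (by rw [mul_one]; exact Real.pi_pos) hinv
        exact this.congr (fun y => by rw [div_eq_mul_inv]; ring)
      have hgbot : Tendsto g (𝓝[<] Real.pi) atBot := by
        have := hA.atTop_mul_atTop₀ (Real.tendsto_exp_atTop.comp hB)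
        exact (tendsto_neg_atTop_atBot.comp this)
      have hlt2 : ∀ᶠ y in 𝓝[<] Real.pi, g y < c := hgbot.eventually (eventually_lt_atBot c)
      have hIoo2 : ∀ᶠ y in 𝓝[<] Real.pi, y ∈ Ioo y₁ Real.pi :=
        Ioo_mem_nhdsLT_of_mem ⟨hy₁mem.2, le_refl _⟩
      obtain ⟨y₂, hy₂c, hy₂mem⟩ := (hlt2.and hIoo2).exists
      -- IVT on [y₁, y₂]
      have hsinpos : ∀ y ∈ Icc y₁ y₂, 0 < Real.sin y := fun y hy =>
        Real.sin_pos_of_pos_of_lt_pi (lt_of_lt_of_le hy₁mem.1 hy.1) (lt_of_le_of_lt hy.2 hy₂mem.2)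
      have hcont : ContinuousOn g (Icc y₁ y₂) := by
        apply ContinuousOn.neg
        apply ContinuousOn.mul
        · exact ContinuousOn.div continuousOn_id Real.continuous_sin.continuousOn
            (fun y hy => (hsinpos y hy).ne')
        · apply Real.continuous_exp.comp_continuousOn
          apply ContinuousOn.neg
          exact ContinuousOn.div (continuousOn_id.mul Real.continuous_cos.continuousOn)
            Real.continuous_sin.continuousOn (fun y hy => (hsinpos y hy).ne')
      obtain ⟨y, hyIcc, hgy⟩ := intermediate_value_Icc' (le_of_lt hy₂mem.1) hcont
        ⟨le_of_lt hy₂c, le_of_lt hy₁c⟩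
      have hsy : 0 < Real.sin y := hsinpos y hyIcc
      set x : ℝ := -(y * Real.cos y / Real.sin y) with hx
      have hxy : x * Real.sin y + y * Real.cos y = 0 := by
        rw [hx]; field_simp; ring
      refine ⟨↑x + ↑y * I, ?_⟩
      rw [aux_mul_exp x y hxy]
      congr 1
      rw [← hgy]
      have hpyth := Real.sin_sq_add_cos_sq y
      rw [hg, hx]
      rw [show -(y * Real.cos y / Real.sin y) = -(y * Real.cos y) / Real.sin y from by ring]
      field_simp
      linear_combination (-y) * hpyth
  · -- c > 0 : IVT on [0, c]
    have hcont : ContinuousOn (fun x : ℝ => x * Real.exp x) (Icc 0 c) :=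
      (continuous_id.mul Real.continuous_exp).continuousOn
    have hmem : c ∈ Icc ((0 : ℝ) * Real.exp 0) (c * Real.exp c) := by
      constructor
      · simp; linarith
      · nlinarith [Real.one_le_exp (le_of_lt hpos)]
    obtain ⟨x, _, hx⟩ := intermediate_value_Icc (le_of_lt hpos) hcont hmem
    exact ofreal x hx

open Complex Bornology in
/-- For `h > 0` and real `α, β` with `β ≠ 0`, the set of complex solutions of the
characteristic equation `s − α = β·exp(−s·h)` is nonempty and has an element of
maximal real part (the rightmost eigenvalue, given by the principal branch `W₀`
of the Lambert W function). -/
theorem exists_rightmost_eigenvalue (h α β : ℝ) (hh : 0 < h) (hβ : β ≠ 0) :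
    ∃ s₀ : ℂ, s₀ - (α : ℂ) = (β : ℂ) * Complex.exp (-s₀ * (h : ℂ)) ∧
      ∀ s : ℂ, s - (α : ℂ) = (β : ℂ) * Complex.exp (-s * (h : ℂ)) → s.re ≤ s₀.re := by
  have hc : β * (h * Real.exp (-(α * h))) ≠ 0 :=
    mul_ne_zero hβ (by positivity)
  obtain ⟨w, hw⟩ := aux_exists_w _ hc
  have hhC : (h : ℂ) ≠ 0 := by exact_mod_cast hh.ne'
  set s₁ : ℂ := ↑α + w / ↑h with hs1
  have hroot1 : s₁ - ↑α = ↑β * Complex.exp (-s₁ * ↑h) := by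
    have h1 : -s₁ * (h : ℂ) = ↑(-(α * h)) + -w := by
      rw [hs1]; push_cast; field_simp; ring
    rw [h1, Complex.exp_add, Complex.exp_neg, ← Complex.ofReal_exp, hs1]
    have hexpne := Complex.exp_ne_zero w
    field_simp
    push_cast at hw ⊢
    linear_combination hw
  set S : Set ℂ := {s | s - ↑α = ↑β * Complex.exp (-s * ↑h)} with hSdef
  have hS1 : s₁ ∈ S := hroot1
  set K := S ∩ {s : ℂ | s₁.re ≤ s.re} with hKdef
  have hKclosed : IsClosed K := by
    apply IsClosed.inter
    · have : S = (fun s => s - ↑α - ↑β * Complex.exp (-s * ↑h)) ⁻¹' {0} := by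
        ext s; simp [hSdef, sub_eq_zero]
      rw [this]
      exact IsClosed.preimage (((continuous_id.sub continuous_const).sub
        (continuous_const.mul (Complex.continuous_exp.comp
          (continuous_id.neg.mul continuous_const))))) isClosed_singleton
    · exact isClosed_le continuous_const Complex.continuous_re
  have hnorm : ∀ s ∈ S, ‖s - ↑α‖ = |β| * Real.exp (-(s.re * h)) := by
    intro s hs
    rw [hs, norm_mul, Complex.norm_real, Real.norm_eq_abs,
      Complex.norm_exp]
    congr 2
    simp [Complex.mul_re]
  have hKbdd : IsBounded K := by
    apply IsBounded.subset (Metric.isBounded_closedBall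
      (x := (0:ℂ)) (r := |α| + |β| * Real.exp (-(s₁.re * h))))
    rintro s ⟨hsS, hsre⟩
    simp only [Metric.mem_closedBall, dist_zero_right]
    have h1 := hnorm s hsS
    have h2 : ‖s‖ ≤ ‖s - ↑α‖ + ‖(↑α : ℂ)‖ := by
      simpa using norm_add_le (s - ↑α) ↑α
    have h3 : Real.exp (-(s.re * h)) ≤ Real.exp (-(s₁.re * h)) := by
      apply Real.exp_le_exp.mpr
      have : s₁.re ≤ s.re := hsre
      nlinarith
    have h4 : ‖(↑α : ℂ)‖ = |α| := by
      rw [Complex.norm_real, Real.norm_eq_abs]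
    nlinarith [abs_nonneg β, abs_nonneg α, norm_nonneg (s - (↑α : ℂ))]
  have hKcompact : IsCompact K := Metric.isCompact_of_isClosed_isBounded hKclosed hKbdd
  obtain ⟨s₀, hs₀K, hs₀max⟩ := hKcompact.exists_isMaxOn ⟨s₁, hS1, Set.mem_setOf.mpr le_rfl⟩
    Complex.continuous_re.continuousOn
  refine ⟨s₀, hs₀K.1, ?_⟩
  intro s hs
  rcases le_or_gt s₁.re s.re with hle | hlt
  · exact hs₀max ⟨hs, hle⟩
  · exact le_trans (le_of_lt hlt) (hs₀max ⟨hS1, Set.mem_setOf.mpr le_rfl⟩)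
end

section
/- Let h > 0, let α, β be real numbers, and let S = u + i·v with u, v real and v ≠ 0 satisfy the characteristic equation S − α = β·exp(−S·h). Then sin(v·h) ≠ 0, and the parameters α and β are uniquely determined by S via α = u + v·cot(v·h) and β = −v·e^{u·h}/sin(v·h). -/
/-- If `S = u + i·v` with `v ≠ 0` satisfies the characteristic equation
`S − α = β·exp(−S·h)` with `h > 0`, then `sin(v·h) ≠ 0` and the parameters are
uniquely determined: `α = u + v·cot(v·h)` and `β = −v·e^{u·h}/sin(v·h)`. -/
theorem params_determined_by_complex_root (h α β u v : ℝ) (hh : 0 < h) (hv : v ≠ 0)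
    (hS : ((u : ℂ) + (v : ℂ) * Complex.I) - (α : ℂ) =
        (β : ℂ) * Complex.exp (-((u : ℂ) + (v : ℂ) * Complex.I) * (h : ℂ))) :
    Real.sin (v * h) ≠ 0 ∧ α = u + v * Real.cot (v * h) ∧
      β = -v * Real.exp (u * h) / Real.sin (v * h) := by
  rw [Complex.ext_iff] at hS
  simp only [Complex.exp_re, Complex.exp_im, Complex.sub_re, Complex.sub_im, Complex.add_re,
    Complex.add_im, Complex.mul_re, Complex.mul_im, Complex.neg_re, Complex.neg_im,
    Complex.ofReal_re, Complex.ofReal_im, Complex.I_re, Complex.I_im] at hS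
  obtain ⟨h1, h2⟩ := hS
  ring_nf at h1 h2
  rw [Real.cos_neg] at h1
  rw [Real.sin_neg] at h2
  have hexp : (0:ℝ) < Real.exp (u*h) := Real.exp_pos _
  have hEE : Real.exp (-(u*h)) * Real.exp (u*h) = 1 := by rw [← Real.exp_add]; simp
  have hsin : Real.sin (v * h) ≠ 0 := by
    intro hs
    rw [hs] at h2
    simp at h2
    exact hv h2
  refine ⟨hsin, ?_, ?_⟩
  · rw [Real.cot_eq_cos_div_sin]
    field_simp
    linear_combination (-Real.sin (v*h)) * h1 + (-Real.cos (v*h)) * h2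
  · field_simp
    linear_combination Real.exp (u*h) * h2 + (-(β * Real.sin (v*h))) * hEE
end

section
/- (Theorem 2(i), existence of feedback gains.) Let a, a₁d, b, h, u, v be real numbers with b ≠ 0, h > 0, v ≠ 0 and sin(v·h) ≠ 0, and set S = u + i·v. Define the real feedback gains k = (u + v·cot(v·h) − a)/b and k₁d = −(v·e^{u·h}/sin(v·h) + a₁d)/b. Then S satisfies the closed-loop characteristic equation S − (a + b·k) = (a₁d + b·k₁d)·exp(−S·h); that is, the prescribed non-real value S is an eigenvalue of the closed-loop system obtained with these gains. -/
/-- Theorem 2(i), existence of feedback gains: with `b ≠ 0`, `h > 0`, `v ≠ 0`,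
`sin(v·h) ≠ 0` and `S = u + i·v`, the real gains
`k = (u + v·cot(v·h) − a)/b` and `k₁d = −(v·e^{u·h}/sin(v·h) + a₁d)/b`
make `S` an eigenvalue of the closed-loop system, i.e.
`S − (a + b·k) = (a₁d + b·k₁d)·exp(−S·h)`. -/
theorem assign_complex_eigenvalue (a a1d b h u v : ℝ) (hb : b ≠ 0) (hh : 0 < h)
    (hv : v ≠ 0) (hsin : Real.sin (v * h) ≠ 0) :
    let S : ℂ := (u : ℂ) + (v : ℂ) * Complex.I
    let k : ℝ := (u + v * Real.cot (v * h) - a) / b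
    let k1d : ℝ := -(v * Real.exp (u * h) / Real.sin (v * h) + a1d) / b
    S - ((a + b * k : ℝ) : ℂ) = ((a1d + b * k1d : ℝ) : ℂ) * Complex.exp (-S * (h : ℂ)) := by
  intro S k k1d
  have hbk : b * k = u + v * Real.cot (v * h) - a := by
    simp only [k]; field_simp
  have hbk1 : b * k1d = -(v * Real.exp (u * h) / Real.sin (v * h) + a1d) := by
    simp only [k1d]; field_simp
  have hS : -S * (h : ℂ) = (↑(-(u * h)) : ℂ) + ↑(-(v * h)) * Complex.I := by
    simp only [S]; push_cast; ring
  rw [hS, Complex.exp_add, ← Complex.ofReal_exp, Complex.exp_mul_I,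
    ← Complex.ofReal_cos, ← Complex.ofReal_sin, hbk, hbk1,
    Real.cot_eq_cos_div_sin, Real.cos_neg, Real.sin_neg]
  simp only [S]
  push_cast
  have h1 : Complex.sin ((v : ℂ) * (h : ℂ)) ≠ 0 := by
    rw [← Complex.ofReal_mul, ← Complex.ofReal_sin]
    exact_mod_cast hsin
  simp only [Complex.exp_neg]
  field_simp [Complex.exp_ne_zero]
  ring
end

section
/- (Theorem 2(i), delay-state-only feedback.) Let a, a₁d, b, h, u, v be real numbers with b ≠ 0, h > 0, v ≠ 0 and sin(v·h) ≠ 0, and set S = u + i·v. Then there exists a real gain k₁d such that S satisfies the characteristic equation S − a = (a₁d + b·k₁d)·exp(−S·h) if and only if a = u + v·cot(v·h); and in that case the gain is given by k₁d = ((S − a)·exp(S·h) − a₁d)/b, which is a real number. -/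
/-- Theorem 2(i), delay-state-only feedback: with `b ≠ 0`, `h > 0`, `v ≠ 0`,
`sin(v·h) ≠ 0` and `S = u + i·v`, there is a real gain `k₁d` with
`S − a = (a₁d + b·k₁d)·exp(−S·h)` iff `a = u + v·cot(v·h)`; in that case the
gain `k₁d = ((S − a)·exp(S·h) − a₁d)/b` is real and achieves the assignment. -/
theorem assign_delay_state_only (a a1d b h u v : ℝ) (hb : b ≠ 0) (hh : 0 < h)
    (hv : v ≠ 0) (hsin : Real.sin (v * h) ≠ 0) :
    let S : ℂ := (u : ℂ) + (v : ℂ) * Complex.I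
    ((∃ k1d : ℝ, S - (a : ℂ) = ((a1d + b * k1d : ℝ) : ℂ) * Complex.exp (-S * (h : ℂ))) ↔
        a = u + v * Real.cot (v * h)) ∧
      (a = u + v * Real.cot (v * h) →
        (((S - (a : ℂ)) * Complex.exp (S * (h : ℂ)) - (a1d : ℂ)) / (b : ℂ)).im = 0 ∧
        S - (a : ℂ) =
          ((a1d + b * (((S - (a : ℂ)) * Complex.exp (S * (h : ℂ)) - (a1d : ℂ)) / (b : ℂ)).re : ℝ) : ℂ) *
            Complex.exp (-S * (h : ℂ))) := by
  intro S
  set E : ℂ := Complex.exp (S * (h : ℂ)) with hEdef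
  have hEne : E ≠ 0 := Complex.exp_ne_zero _
  have hmul : Complex.exp (-S * (h : ℂ)) * E = 1 := by
    rw [hEdef, ← Complex.exp_add]; ring_nf; exact Complex.exp_zero
  have hre : (S * (h : ℂ)).re = u * h := by simp [S]
  have him0 : (S * (h : ℂ)).im = v * h := by simp [S]
  have hEre : E.re = Real.exp (u * h) * Real.cos (v * h) := by
    rw [hEdef, Complex.exp_re, hre, him0]
  have hEim : E.im = Real.exp (u * h) * Real.sin (v * h) := by
    rw [hEdef, Complex.exp_im, hre, him0]
  have himSE : ((S - (a : ℂ)) * E).im =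
      Real.exp (u * h) * ((u - a) * Real.sin (v * h) + v * Real.cos (v * h)) := by
    simp [S, Complex.mul_im, hEre, hEim]
    ring
  have hcond : (a = u + v * Real.cot (v * h)) ↔
      (u - a) * Real.sin (v * h) + v * Real.cos (v * h) = 0 := by
    rw [Real.cot_eq_cos_div_sin]
    constructor
    · intro ha; rw [ha]; field_simp; ring
    · intro hz; field_simp; nlinarith [hz]
  have hexpne : Real.exp (u * h) ≠ 0 := Real.exp_ne_zero _
  constructor
  · constructor
    · rintro ⟨k1d, hk⟩
      have h1 : (S - (a : ℂ)) * E = ((a1d + b * k1d : ℝ) : ℂ) := by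
        rw [hk, mul_assoc, hmul, mul_one]
      have h2 : ((S - (a : ℂ)) * E).im = 0 := by rw [h1]; simp
      rw [himSE] at h2
      rw [hcond]
      rcases mul_eq_zero.1 h2 with h | h
      · exact absurd h hexpne
      · exact h
    · intro ha
      refine ⟨(((S - (a : ℂ)) * E - (a1d : ℂ)) / (b : ℂ)).re, ?_⟩
      have hz := hcond.1 ha
      have h2 : ((S - (a : ℂ)) * E).im = 0 := by rw [himSE, hz, mul_zero]
      have h3 : (((S - (a : ℂ)) * E - (a1d : ℂ)) / (b : ℂ)).im = 0 := by
        simp [Complex.div_im, h2]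
      have h4 : ((((S - (a : ℂ)) * E - (a1d : ℂ)) / (b : ℂ)).re : ℂ) =
          ((S - (a : ℂ)) * E - (a1d : ℂ)) / (b : ℂ) := by
        exact (Complex.ext_iff.2 ⟨by simp, by simp [h3]⟩)
      have hbne : (b : ℂ) ≠ 0 := by exact_mod_cast hb
      have h5 : ((a1d + b * (((S - (a : ℂ)) * E - (a1d : ℂ)) / (b : ℂ)).re : ℝ) : ℂ)
          = (S - (a : ℂ)) * E := by
        push_cast
        rw [h4]
        field_simp
        ring
      have hmul' : E * Complex.exp (-S * (h : ℂ)) = 1 := by rw [mul_comm]; exact hmul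
      rw [h5, mul_assoc, hmul', mul_one]
  · intro ha
    have hz := hcond.1 ha
    have h2 : ((S - (a : ℂ)) * E).im = 0 := by rw [himSE, hz, mul_zero]
    have h3 : (((S - (a : ℂ)) * E - (a1d : ℂ)) / (b : ℂ)).im = 0 := by
      simp [Complex.div_im, h2]
    refine ⟨h3, ?_⟩
    have h4 : ((((S - (a : ℂ)) * E - (a1d : ℂ)) / (b : ℂ)).re : ℂ) =
        ((S - (a : ℂ)) * E - (a1d : ℂ)) / (b : ℂ) :=
      (Complex.ext_iff.2 ⟨by simp, by simp [h3]⟩)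
    have hbne : (b : ℂ) ≠ 0 := by exact_mod_cast hb
    have h5 : ((a1d + b * (((S - (a : ℂ)) * E - (a1d : ℂ)) / (b : ℂ)).re : ℝ) : ℂ)
        = (S - (a : ℂ)) * E := by
      push_cast
      rw [h4]
      field_simp
      ring
    have hmul' : E * Complex.exp (-S * (h : ℂ)) = 1 := by rw [mul_comm]; exact hmul
    rw [h5, mul_assoc, hmul', mul_one]
end

section
/- (Theorem 2(i), current-state-only feedback.) Let a, a₁d, b, h, u, v be real numbers with b ≠ 0, h > 0, v ≠ 0 and sin(v·h) ≠ 0, and set S = u + i·v. Then there exists a real gain k such that S satisfies the characteristic equation S − (a + b·k) = a₁d·exp(−S·h) if and only if a₁d = −v·e^{u·h}/sin(v·h); and in that case the gain is given by k = (S − a − a₁d·exp(−S·h))/b, which is a real number. -/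
/-- Theorem 2(i), current-state-only feedback: with `b ≠ 0`, `h > 0`, `v ≠ 0`,
`sin(v·h) ≠ 0` and `S = u + i·v`, there is a real gain `k` with
`S − (a + b·k) = a₁d·exp(−S·h)` iff `a₁d = −v·e^{u·h}/sin(v·h)`; in that case the
gain `k = (S − a − a₁d·exp(−S·h))/b` is real and achieves the assignment. -/
theorem assign_current_state_only (a a1d b h u v : ℝ) (hb : b ≠ 0) (hh : 0 < h)
    (hv : v ≠ 0) (hsin : Real.sin (v * h) ≠ 0) :
    let S : ℂ := (u : ℂ) + (v : ℂ) * Complex.I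
    ((∃ k : ℝ, S - ((a + b * k : ℝ) : ℂ) = (a1d : ℂ) * Complex.exp (-S * (h : ℂ))) ↔
        a1d = -v * Real.exp (u * h) / Real.sin (v * h)) ∧
      (a1d = -v * Real.exp (u * h) / Real.sin (v * h) →
        (((S - (a : ℂ) - (a1d : ℂ) * Complex.exp (-S * (h : ℂ))) / (b : ℂ)).im = 0 ∧
          S - ((a + b * ((S - (a : ℂ) - (a1d : ℂ) * Complex.exp (-S * (h : ℂ))) / (b : ℂ)).re : ℝ) : ℂ) =
            (a1d : ℂ) * Complex.exp (-S * (h : ℂ)))) := by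
  intro S
  obtain ⟨cr, hcr⟩ : ∃ x : ℝ, x = Real.exp (-(u * h)) * Real.cos (v * h) := ⟨_, rfl⟩
  obtain ⟨ci, hci⟩ : ∃ x : ℝ, x = -(Real.exp (-(u * h)) * Real.sin (v * h)) := ⟨_, rfl⟩
  have hexp : Real.exp (-(u * h)) * Real.exp (u * h) = 1 := by
    rw [← Real.exp_add]; simp
  have hE : Complex.exp (-S * (h : ℂ)) = (cr : ℂ) + (ci : ℂ) * Complex.I := by
    have hform : -S * (h : ℂ) = ((-(u * h) : ℝ) : ℂ) + ((-(v * h) : ℝ) : ℂ) * Complex.I := by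
      simp only [S]; push_cast; ring
    rw [hform, Complex.exp_add, Complex.exp_mul_I, ← Complex.ofReal_exp,
      ← Complex.ofReal_cos, ← Complex.ofReal_sin]
    rw [hcr, hci]
    push_cast [Real.cos_neg, Real.sin_neg]
    ring
  have hci' : a1d = -v * Real.exp (u * h) / Real.sin (v * h) → a1d * ci = v := by
    intro ha
    have h6 : a1d * Real.sin (v * h) = -(v * Real.exp (u * h)) := by
      rw [ha, div_mul_cancel₀ _ hsin]; ring
    linear_combination a1d * hci - Real.exp (-(u * h)) * h6 + v * hexp
  constructor
  · constructor
    · rintro ⟨k, hk⟩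
      rw [hE] at hk
      have him : v = a1d * ci := by
        have h0 := congrArg Complex.im hk
        simpa [S] using h0
      rw [eq_div_iff hsin]
      linear_combination Real.exp (u * h) * him + a1d * Real.exp (u * h) * hci -
        a1d * Real.sin (v * h) * hexp
    · intro ha
      refine ⟨(u - a - a1d * cr) / b, ?_⟩
      rw [hE]
      apply Complex.ext
      · simp [S]
        field_simp
        ring
      · simp [S, hci' ha]
  · intro ha
    have hz : S - (a : ℂ) - (a1d : ℂ) * Complex.exp (-S * (h : ℂ)) = ((u - a - a1d * cr : ℝ) : ℂ) := by
      rw [hE]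
      apply Complex.ext
      · simp [S]
      · simp [S, hci' ha]
    rw [hz]
    have hdiv : (((u - a - a1d * cr : ℝ) : ℂ) / (b : ℂ)) = (((u - a - a1d * cr) / b : ℝ) : ℂ) := by
      push_cast; ring
    rw [hdiv]
    refine ⟨by simp, ?_⟩
    rw [hE]
    apply Complex.ext
    · simp [S]
      field_simp
      ring
    · simp [S, hci' ha]
end

section
/- Let h > 0 and α, β be real numbers with β·h·e^{−α·h} ≥ −e^{−1}. Then there exists a unique real number s with s ≥ α − 1/h satisfying the characteristic equation s − α = β·e^{−s·h}. -/
/-- Lambert W₀ branch: for `y ≥ -e⁻¹` there is a unique `w ≥ -1` with `w eʷ = y`. -/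
lemma lambert_exists_unique (y : ℝ) (hy : -Real.exp (-1) ≤ y) :
    ∃! w : ℝ, -1 ≤ w ∧ w * Real.exp w = y := by
  have hc : Continuous fun w : ℝ => w * Real.exp w := continuous_id.mul Real.continuous_exp
  have hmono : StrictMonoOn (fun w : ℝ => w * Real.exp w) (Set.Ici (-1)) := by
    apply strictMonoOn_of_deriv_pos (convex_Ici _) hc.continuousOn
    intro x hx
    rw [interior_Ici] at hx
    have hx' : (-1 : ℝ) < x := hx
    have hd : HasDerivAt (fun w : ℝ => w * Real.exp w) (1 * Real.exp x + x * Real.exp x) x :=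
      (hasDerivAt_id x).mul (Real.hasDerivAt_exp x)
    rw [hd.deriv]
    nlinarith [Real.exp_pos x]
  set b := max 0 y with hbdef
  have hb0 : 0 ≤ b := le_max_left _ _
  have hfb : y ≤ b * Real.exp b := by
    have h1 : (1:ℝ) ≤ Real.exp b := Real.one_le_exp hb0
    nlinarith [le_max_right 0 y]
  have hab : (-1:ℝ) ≤ b := by linarith
  have hy' : y ∈ Set.Icc ((fun w : ℝ => w * Real.exp w) (-1)) ((fun w : ℝ => w * Real.exp w) b) := by
    constructor
    · simpa using hy
    · exact hfb
  obtain ⟨w, hw, hwy⟩ := intermediate_value_Icc hab hc.continuousOn hy'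
  exact ⟨w, ⟨hw.1, hwy⟩, fun w' ⟨h1, h2⟩ =>
    hmono.injOn (Set.mem_Ici.2 h1) (Set.mem_Ici.2 hw.1) (by rw [h2]; exact hwy.symm)⟩

/-- For `h > 0` and real `α, β` with `β·h·e^{−α·h} ≥ −e^{−1}`, there exists a
unique real `s` with `s ≥ α − 1/h` satisfying `s − α = β·e^{−s·h}`. -/
theorem exists_unique_real_root (h α β : ℝ) (hh : 0 < h)
    (hβ : β * h * Real.exp (-α * h) ≥ -Real.exp (-1)) :
    ∃! s : ℝ, s ≥ α - 1 / h ∧ s - α = β * Real.exp (-s * h) := by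
  obtain ⟨w, ⟨hw1, hw2⟩, hwuniq⟩ := lambert_exists_unique (β * h * Real.exp (-α * h)) hβ
  have hhne : h ≠ 0 := hh.ne'
  refine ⟨α + w / h, ⟨?_, ?_⟩, ?_⟩
  · have : -1 / h ≤ w / h := by gcongr
    have h1 : -1 / h = -(1 / h) := by ring
    linarith [this, h1 ▸ this]
  · -- equation
    have hexp : Real.exp (-(α + w / h) * h) = Real.exp (-α * h) * Real.exp (-w) := by
      rw [← Real.exp_add]
      congr 1
      field_simp
      ring
    have h1 : Real.exp w * Real.exp (-w) = 1 := by rw [← Real.exp_add]; simp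
    have key : w = β * h * Real.exp (-α * h) * Real.exp (-w) := by
      calc w = w * (Real.exp w * Real.exp (-w)) := by rw [h1, mul_one]
        _ = (w * Real.exp w) * Real.exp (-w) := by ring
        _ = β * h * Real.exp (-α * h) * Real.exp (-w) := by rw [hw2]
    rw [hexp]
    have : α + w / h - α = w / h := by ring
    rw [this, div_eq_iff hhne]
    linear_combination key
  · rintro s' ⟨hs1, hs2⟩
    have hE : Real.exp (-s' * h) * Real.exp ((s' - α) * h) = Real.exp (-α * h) := by
      rw [← Real.exp_add]; congr 1; ring
    have hw1' : -1 ≤ (s' - α) * h := by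
      have h2' : -(1 / h) ≤ s' - α := by linarith
      have h3' : -(1 / h) * h ≤ (s' - α) * h := mul_le_mul_of_nonneg_right h2' hh.le
      have h4' : -(1 / h) * h = -1 := by field_simp
      linarith
    have hw2' : ((s' - α) * h) * Real.exp ((s' - α) * h) = β * h * Real.exp (-α * h) := by
      linear_combination (h * Real.exp ((s' - α) * h)) * hs2 + (β * h) * hE
    have := hwuniq ((s' - α) * h) ⟨hw1', hw2'⟩
    field_simp
    linarith [this]
end

section
/- (Rightmostness of the assigned real eigenvalue.) Let h > 0, let α, β be real numbers, and let S be a real solution of the characteristic equation S − α = β·e^{−S·h} satisfying (S − α)·h ≥ −1. Then every complex solution s of s − α = β·e^{−s·h} satisfies Re(s) ≤ S; that is, S is the rightmost eigenvalue of the system. -/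
/-- Rightmostness of the assigned real eigenvalue: if `h > 0` and the real
number `S` solves `S − α = β·e^{−S·h}` with `(S − α)·h ≥ −1` (i.e. `(S−α)h` lies
in the range of the principal branch `W₀`), then every complex solution `s` of
the characteristic equation satisfies `Re(s) ≤ S`. -/
theorem real_root_is_rightmost (h α β S : ℝ) (hh : 0 < h)
    (hS : S - α = β * Real.exp (-S * h)) (hW : (S - α) * h ≥ -1) :
    ∀ s : ℂ, s - (α : ℂ) = (β : ℂ) * Complex.exp (-s * (h : ℂ)) → s.re ≤ S := by
  intro s hs
  by_contra hx
  push_neg at hx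
  set x := s.re with hxdef
  set y := s.im with hydef
  -- real and imaginary parts of the characteristic equation
  have hre : x - α = β * (Real.exp (-x * h) * Real.cos (y * h)) := by
    have := congrArg Complex.re hs
    simpa [Complex.sub_re, Complex.mul_re, Complex.exp_re, Complex.exp_im,
      Complex.neg_re, Complex.neg_im, Complex.mul_im, Real.cos_neg, Real.sin_neg,
      mul_comm] using this
  have him : y = -(β * (Real.exp (-x * h) * Real.sin (y * h))) := by
    have := congrArg Complex.im hs
    simpa [Complex.sub_im, Complex.mul_im, Complex.exp_re, Complex.exp_im,
      Complex.neg_re, Complex.neg_im, Complex.mul_re, Real.cos_neg, Real.sin_neg,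
      mul_comm] using this
  have hE : Real.exp (-x * h) < Real.exp (-S * h) := by
    apply Real.exp_lt_exp.2
    nlinarith
  have hEpos := Real.exp_pos (-x * h)
  have hSpos := Real.exp_pos (-S * h)
  rcases le_or_gt 0 β with hb | hb
  · -- β ≥ 0 : real part gives x - α ≤ β e^{-xh} ≤ β e^{-Sh} = S - α
    have h1 : β * (Real.exp (-x * h) * Real.cos (y * h)) ≤ β * Real.exp (-x * h) := by
      nlinarith [Real.cos_le_one (y * h),
        mul_nonneg (mul_nonneg hb hEpos.le) (sub_nonneg.2 (Real.cos_le_one (y * h)))]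
    have h2 : β * Real.exp (-x * h) ≤ β * Real.exp (-S * h) := by nlinarith
    linarith [hre, hS]
  · -- β < 0
    rcases eq_or_ne y 0 with hy | hy
    · -- s is real: elementary inequality e^{-t} > 1 - t with t = (x-S)h
      rw [hy] at hre
      simp only [zero_mul, Real.cos_zero, mul_one] at hre
      -- hre : x - α = β * Real.exp (-x * h)
      have ht : 0 < (x - S) * h := mul_pos (by linarith) hh
      have hexp : 1 - (x - S) * h < Real.exp (-((x - S) * h)) := by
        have := Real.add_one_lt_exp (x := -((x - S) * h)) (by linarith)
        linarith
      have hsplit : Real.exp (-x * h) = Real.exp (-S * h) * Real.exp (-((x - S) * h)) := by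
        rw [← Real.exp_add]; ring_nf
      have hSa : S - α < 0 := by nlinarith
      have key0 : x - α = (S - α) * Real.exp (-((x - S) * h)) := by
        rw [hre, hsplit, hS]; ring
      have k := mul_lt_mul_of_neg_left hexp hSa
      -- k : (S-α) * exp(-(x-S)h) < (S-α) * (1 - (x-S)h)
      have key2 : -(x - S) ≤ (S - α) * ((x - S) * h) := by
        nlinarith [mul_nonneg (show (0:ℝ) ≤ 1 + (S - α) * h by linarith)
          (show (0:ℝ) ≤ x - S by linarith)]
      nlinarith [key0, k, key2]
    · -- y ≠ 0 : imaginary part gives 1 ≤ |β| h e^{-xh} < (α-S)h ≤ 1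
      have hsin : |Real.sin (y * h)| ≤ |y| * h := by
        calc |Real.sin (y * h)| ≤ |y * h| := Real.abs_sin_le_abs
          _ = |y| * h := by rw [abs_mul, abs_of_pos hh]
      have habs : |y| = -β * Real.exp (-x * h) * |Real.sin (y * h)| := by
        have := congrArg abs him
        rw [this, abs_neg, abs_mul, abs_mul, abs_of_nonpos hb.le, abs_of_pos hEpos]
        ring
      have hypos : 0 < |y| := abs_pos.2 hy
      have c1 : -β * Real.exp (-x * h) * |Real.sin (y * h)| ≤
          -β * Real.exp (-x * h) * (|y| * h) :=
        mul_le_mul_of_nonneg_left hsin (by nlinarith)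
      have h1 : |y| ≤ -β * Real.exp (-x * h) * (|y| * h) := by
        linarith [habs.le, c1]
      have h2 : 1 ≤ -β * Real.exp (-x * h) * h := by nlinarith [h1, hypos]
      have h3 : -β * Real.exp (-x * h) * h < -β * Real.exp (-S * h) * h := by
        nlinarith
      have h4 : -β * Real.exp (-S * h) * h = (α - S) * h := by
        linear_combination h * hS
      linarith [h2, h3, h4, hW]
end

section
/- (Rightmostness of the assigned complex eigenvalue.) Let h > 0, let α, β be real numbers, and let S = u + i·v with u, v real, 0 < v·h < π, and u − α = −v·cot(v·h), be a solution of the characteristic equation S − α = β·e^{−S·h}. Then every complex solution s of s − α = β·e^{−s·h} satisfies Re(s) ≤ u; that is, S (together with its conjugate) is the rightmost eigenvalue of the system. -/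
open Real Set


private lemma sinpos' {t : ℝ} (ht : t ∈ Ioo 0 π) : 0 < sin t :=
  sin_pos_of_pos_of_lt_pi ht.1 ht.2

private lemma cos_lt_half {t : ℝ} (ht : t ∈ Ioo 0 π) (hc : 0 < cos t) : t < π / 2 := by
  by_contra hle
  push_neg at hle
  have := cos_nonpos_of_pi_div_two_le_of_le hle (by nlinarith [pi_pos, ht.2])
  linarith

private lemma num1_pos {t : ℝ} (ht : t ∈ Ioo 0 π) : 0 < sin t - t * cos t := by
  rcases le_or_gt (cos t) 0 with hc | hc
  · nlinarith [sinpos' ht, ht.1]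
  · have h2 : t < π / 2 := cos_lt_half ht hc
    have := lt_tan ht.1 h2
    rw [tan_eq_sin_div_cos, lt_div_iff₀ hc] at this
    linarith

private lemma num2_pos {t : ℝ} (ht : 0 < t) : 0 < t - sin t * cos t := by
  have h := sin_lt (by linarith : (0:ℝ) < 2 * t)
  have h2 : sin (2 * t) = 2 * sin t * cos t := sin_two_mul t
  nlinarith

private lemma monoR : StrictMonoOn (fun t => t / sin t) (Ioo 0 π) := by
  apply strictMonoOn_of_deriv_pos (convex_Ioo 0 π)
  · exact ContinuousOn.div continuousOn_id continuous_sin.continuousOn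
      (fun t ht => (sinpos' ht).ne')
  · intro t ht
    rw [interior_Ioo] at ht
    have hd : HasDerivAt (fun t => t / sin t) ((1 * sin t - t * cos t) / sin t ^ 2) t :=
      (hasDerivAt_id t).div (hasDerivAt_sin t) (sinpos' ht).ne'
    rw [hd.deriv]
    apply div_pos (by nlinarith [num1_pos ht]) (pow_pos (sinpos' ht) 2)

private lemma monoG : StrictMonoOn (fun t => -(t * cos t) / sin t) (Ioo 0 π) := by
  apply strictMonoOn_of_deriv_pos (convex_Ioo 0 π)
  · exact ContinuousOn.div (ContinuousOn.neg (continuousOn_id.mul continuous_cos.continuousOn))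
      continuous_sin.continuousOn (fun t ht => (sinpos' ht).ne')
  · intro t ht
    rw [interior_Ioo] at ht
    have hd : HasDerivAt (fun t => -(t * cos t) / sin t)
        ((-(1 * cos t + t * (-sin t)) * sin t - -(t * cos t) * cos t) / sin t ^ 2) t :=
      (((hasDerivAt_id t).mul (hasDerivAt_cos t)).neg).div (hasDerivAt_sin t) (sinpos' ht).ne'
    rw [hd.deriv]
    apply div_pos _ (pow_pos (sinpos' ht) 2)
    have h1 : -(1 * cos t + t * (-sin t)) * sin t - -(t * cos t) * cos t
        = t * (sin t ^ 2 + cos t ^ 2) - sin t * cos t := by ring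
    rw [h1, sin_sq_add_cos_sq t, mul_one]
    exact num2_pos ht.1

private lemma monoF :
    StrictMonoOn (fun t => Real.log (t / sin t) + -(t * cos t) / sin t) (Ioo 0 π) := by
  intro a ha b hb hab
  have h1 := monoR ha hb hab
  have h2 := monoG ha hb hab
  simp only at h1 h2 ⊢
  have hpa : 0 < a / sin a := div_pos ha.1 (sinpos' ha)
  exact add_lt_add (Real.log_lt_log hpa h1) h2


-- 5*(t - sin t) < 7*(t*sin(t/2)) for t ∈ (0, π/2)
private lemma lin_bound {t : ℝ} (h0 : 0 < t) (h2 : t < π / 2) :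
    5 * (t - sin t) < 7 * (t * sin (t / 2)) := by
  rcases le_or_gt t 1 with ht1 | ht1
  · have a1 : t / 2 - (t / 2) ^ 3 / 4 < sin (t / 2) :=
      by nlinarith [sin_gt_sub_cube (by linarith : (0:ℝ) < t / 2), pow_pos (by linarith : (0:ℝ) < t / 2) 3]
    have a2 : t - t ^ 3 / 4 < sin t := by nlinarith [sin_gt_sub_cube h0, pow_pos h0 3]
    have a1' := mul_lt_mul_of_pos_left a1 (by linarith : (0:ℝ) < 7 * t)
    have step : 5 * (t ^ 3 / 4) ≤ 7 * t * (t / 2 - (t / 2) ^ 3 / 4) := by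
      nlinarith [mul_nonneg (mul_nonneg h0.le h0.le) (sub_nonneg.2 ht1),
        mul_nonneg (mul_nonneg (mul_nonneg h0.le h0.le) h0.le) (sub_nonneg.2 ht1),
        pow_pos h0 4]
    nlinarith [a1', a2, step]
  · have hpi : π < 3.15 := pi_lt_d2
    have s1 : (15:ℝ)/32 < sin (1/2) := by
      have := sin_gt_sub_cube (by norm_num : (0:ℝ) < 1/2)
      norm_num at this ⊢
      linarith
    have s2 : (3:ℝ)/4 < sin 1 := by
      have := sin_gt_sub_cube (by norm_num : (0:ℝ) < 1)
      norm_num at this ⊢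
      linarith
    have m1 : sin (1/2) ≤ sin (t/2) := by
      apply strictMonoOn_sin.monotoneOn ⟨by linarith [pi_gt_three], by linarith [pi_gt_three]⟩
        ⟨by linarith [pi_gt_three], by linarith⟩ (by linarith)
    have m2 : sin 1 ≤ sin t := by
      apply strictMonoOn_sin.monotoneOn ⟨by linarith [pi_gt_three], by linarith [pi_gt_three]⟩
        ⟨by linarith [pi_gt_three], by linarith⟩ (by linarith)
    nlinarith [mul_le_mul_of_nonneg_left m1 (by linarith : (0:ℝ) ≤ 7 * t)]

-- key inequality: C > 1/e on the branch-0 boundary curve restricted to (0, π/2)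
private lemma key_ineq {t : ℝ} (h0 : 0 < t) (h2 : t < π / 2) :
    Real.exp (-1) < (t / sin t) * Real.exp (-(t * cos t) / sin t) := by
  have hs : 0 < sin t := sin_pos_of_pos_of_lt_pi h0 (by linarith [pi_pos])
  have hρ : 0 < t / sin t := div_pos h0 hs
  have hc : cos t = 1 - 2 * sin (t / 2) ^ 2 := by
    have := sin_sq_eq_half_sub (t / 2)
    have h' : 2 * (t / 2) = t := by ring
    rw [h'] at this
    linarith
  have hnn : 0 ≤ t - sin t := by linarith [sin_lt h0]
  have hb := lin_bound h0 h2
  have hP : sin t ^ 2 + t ^ 2 * cos t < 2 * t * sin t := by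
    have hsq : (5 * (t - sin t)) ^ 2 < (7 * (t * sin (t / 2))) ^ 2 := by
      apply sq_lt_sq' _ hb
      nlinarith
    nlinarith [hsq, hc, mul_pos h0 h0, sq_nonneg (t * sin (t/2))]
  -- now log form
  rw [← Real.exp_log hρ, ← Real.exp_add]
  apply Real.exp_lt_exp.2
  have hlog : 1 - sin t / t ≤ Real.log (t / sin t) := by
    have := Real.log_le_sub_one_of_pos (div_pos hs h0)
    rw [Real.log_div hs.ne' h0.ne'] at this
    rw [Real.log_div h0.ne' hs.ne']
    linarith
  have hfrac : sin t / t + t * cos t / sin t < 2 := by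
    rw [div_add_div _ _ h0.ne' hs.ne', div_lt_iff₀ (by positivity)]
    nlinarith [hP]
  have : -(t * cos t) / sin t = -(t * cos t / sin t) := by ring
  rw [this]
  linarith



private lemma cos_lt_half' {t : ℝ} (ht : t ∈ Ioo 0 π) (hc : 0 < cos t) : t < π / 2 := by
  by_contra hle
  push_neg at hle
  have := cos_nonpos_of_pi_div_two_le_of_le hle (by nlinarith [pi_pos, ht.2])
  linarith

private lemma cos_pos_of {θ w : ℝ} (hθ : 0 < θ) (hs : 0 < sin θ)
    (hw : w = -(θ * cos θ) / sin θ) (hneg : w < 0) : 0 < cos θ := by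
  by_contra hc
  push_neg at hc
  have : 0 ≤ -(θ * cos θ) / sin θ := by
    apply div_nonneg _ hs.le
    nlinarith
  rw [← hw] at this
  linarith

/-- normalize the two real equations of a root with `sin θ ≠ 0` -/
private lemma reduce {C w θ : ℝ} (hs : sin θ ≠ 0)
    (ere : Real.exp w * (w * cos θ - θ * sin θ) = -C)
    (eim : w * sin θ + θ * cos θ = 0) :
    w = -(θ * cos θ) / sin θ ∧ Real.exp w * (θ / sin θ) = C := by
  have hw : w = -(θ * cos θ) / sin θ := by
    rw [eq_div_iff hs]
    linarith
  refine ⟨hw, ?_⟩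
  have pyth := sin_sq_add_cos_sq θ
  have h1 : w * cos θ - θ * sin θ = -θ / sin θ := by
    rw [eq_div_iff hs]
    linear_combination cos θ * eim + (-θ) * pyth
  rw [h1] at ere
  linear_combination (-1 : ℝ) * ere

set_option maxHeartbeats 2000000 in
private lemma key_real (C w₁ θ₁ w₂ θ₂ : ℝ) (h1 : θ₁ ∈ Ioo 0 π) (hθ₂ : 0 ≤ θ₂)
    (e1re : Real.exp w₁ * (w₁ * cos θ₁ - θ₁ * sin θ₁) = -C)
    (e1im : w₁ * sin θ₁ + θ₁ * cos θ₁ = 0)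
    (e2re : Real.exp w₂ * (w₂ * cos θ₂ - θ₂ * sin θ₂) = -C)
    (e2im : w₂ * sin θ₂ + θ₂ * cos θ₂ = 0) : w₂ ≤ w₁ := by
  have hs1 : 0 < sin θ₁ := sin_pos_of_pos_of_lt_pi h1.1 h1.2
  obtain ⟨hw1, hC1⟩ := reduce hs1.ne' e1re e1im
  have hρ₁pos : 0 < θ₁ / sin θ₁ := div_pos h1.1 hs1
  have hCpos : 0 < C := by
    rw [← hC1]; positivity
  by_contra hlt
  push_neg at hlt
  -- hlt : w₁ < w₂
  rcases eq_or_lt_of_le hθ₂ with heq | hθ₂pos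
  · -- real root case: θ₂ = 0
    rw [← heq] at e2re
    simp at e2re
    have hw2neg : w₂ < 0 := by
      nlinarith [Real.exp_pos w₂, hCpos]
    have hw1neg : w₁ < 0 := hlt.trans hw2neg
    have hcos1 : 0 < cos θ₁ := cos_pos_of h1.1 hs1 hw1 hw1neg
    have hhalf : θ₁ < π / 2 := cos_lt_half' h1 hcos1
    have hKI := key_ineq h1.1 hhalf
    rw [← hw1] at hKI
    have hCgt : Real.exp (-1) < C := by
      rw [← hC1]; linarith [hKI]
    have hCle : C ≤ Real.exp (-1) := by
      have h3 := Real.add_one_le_exp (-1 - w₂)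
      have h4 : -w₂ ≤ Real.exp (-1 - w₂) := by linarith
      have h5 := mul_le_mul_of_nonneg_right h4 (Real.exp_pos w₂).le
      rw [← Real.exp_add] at h5
      have h6 : -1 - w₂ + w₂ = -1 := by ring
      rw [h6] at h5
      nlinarith [e2re]
    linarith
  · -- θ₂ > 0
    have hs2ne : sin θ₂ ≠ 0 := by
      intro h
      rw [h] at e2im
      simp at e2im
      rcases e2im with h' | h'
      · exact absurd h' hθ₂pos.ne'
      · have := sin_sq_add_cos_sq θ₂
        rw [h, h'] at this
        norm_num at this
    obtain ⟨hw2, hC2⟩ := reduce hs2ne e2re e2im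
    have hρ₂pos : 0 < θ₂ / sin θ₂ := by
      by_contra hn
      push_neg at hn
      nlinarith [Real.exp_pos w₂, hC2]
    have hs2 : 0 < sin θ₂ := by
      rcases lt_trichotomy (sin θ₂) 0 with h | h | h
      · exact absurd (div_neg_of_pos_of_neg hθ₂pos h) (not_lt.2 hρ₂pos.le)
      · exact absurd h hs2ne
      · exact h
    rcases lt_or_ge θ₂ π with hb | hc
    · -- both in (0, π): uniqueness via monoF
      have h2mem : θ₂ ∈ Ioo 0 π := ⟨hθ₂pos, hb⟩
      have k1 : Real.log (θ₁ / sin θ₁) + w₁ = Real.log C := by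
        rw [← hC1, Real.log_mul (Real.exp_pos w₁).ne' hρ₁pos.ne', Real.log_exp]
        ring
      have k2 : Real.log (θ₂ / sin θ₂) + w₂ = Real.log C := by
        rw [← hC2, Real.log_mul (Real.exp_pos w₂).ne' hρ₂pos.ne', Real.log_exp]
        ring
      have hFeq : Real.log (θ₁ / sin θ₁) + -(θ₁ * cos θ₁) / sin θ₁
          = Real.log (θ₂ / sin θ₂) + -(θ₂ * cos θ₂) / sin θ₂ := by
        rw [← hw1, ← hw2]
        linarith
      have heq12 : θ₁ = θ₂ := monoF.injOn h1 h2mem hFeq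
      rw [heq12, ← hw2] at hw1
      linarith
    · -- θ₂ ≥ π, so θ₂ > 2π
      have h2pi : 2 * π < θ₂ := by
        rcases lt_or_ge (2 * π) θ₂ with h | h
        · exact h
        · exfalso
          have h7 : 0 ≤ sin (θ₂ - π) := sin_nonneg_of_nonneg_of_le_pi (by linarith) (by linarith)
          rw [sin_sub_pi] at h7
          linarith
      have hρ₂big : θ₂ ≤ θ₂ / sin θ₂ := by
        rw [le_div_iff₀ hs2]
        nlinarith [sin_le_one θ₂]
      have hρlt : θ₂ / sin θ₂ < θ₁ / sin θ₁ := by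
        have hee : Real.exp w₁ < Real.exp w₂ := Real.exp_lt_exp.2 hlt
        nlinarith [hC1, hC2, Real.exp_pos w₁, Real.exp_pos w₂]
      have p1 : w₁ ^ 2 + θ₁ ^ 2 = (θ₁ / sin θ₁) ^ 2 := by
        rw [div_pow, eq_div_iff (pow_ne_zero 2 hs1.ne')]
        linear_combination (w₁ * sin θ₁ - θ₁ * cos θ₁) * e1im + θ₁ ^ 2 * sin_sq_add_cos_sq θ₁
      have p2 : w₂ ^ 2 + θ₂ ^ 2 = (θ₂ / sin θ₂) ^ 2 := by
        rw [div_pow, eq_div_iff (pow_ne_zero 2 hs2ne)]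
        linear_combination (w₂ * sin θ₂ - θ₂ * cos θ₂) * e2im + θ₂ ^ 2 * sin_sq_add_cos_sq θ₂
      have hθlt : θ₁ < θ₂ := by linarith [h1.2, pi_pos]
      have hA : (θ₂ / sin θ₂) ^ 2 < (θ₁ / sin θ₁) ^ 2 := by nlinarith [hρlt, hρ₂pos]
      have hB : θ₁ ^ 2 < θ₂ ^ 2 := by nlinarith [hθlt, h1.1]
      have hsq : w₂ ^ 2 < w₁ ^ 2 := by linarith [p1, p2, hA, hB]
      have hw1neg : w₁ < 0 := by
        by_contra hn
        push_neg at hn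
        have h9 : w₁ ^ 2 ≤ w₂ ^ 2 := by
          have := mul_le_mul hlt.le hlt.le hn (hn.trans hlt.le)
          nlinarith [this]
        linarith
      have hcos1 : 0 < cos θ₁ := cos_pos_of h1.1 hs1 hw1 hw1neg
      have hhalf : θ₁ < π / 2 := cos_lt_half' h1 hcos1
      have hmem : π / 2 ∈ Ioo 0 π := ⟨by positivity, by linarith [pi_pos]⟩
      have hR := monoR h1 hmem hhalf
      simp only at hR
      rw [Real.sin_pi_div_two, div_one] at hR
      linarith [pi_pos]


private lemma root_eqs {h α β : ℝ} (r : ℂ)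
    (hr : r - (α : ℂ) = (β : ℂ) * Complex.exp (-r * (h : ℂ))) :
    Real.exp ((r.re - α) * h) * (((r.re - α) * h) * Real.cos (r.im * h)
        - (r.im * h) * Real.sin (r.im * h)) = β * h * Real.exp (-(α * h)) ∧
    ((r.re - α) * h) * Real.sin (r.im * h) + (r.im * h) * Real.cos (r.im * h) = 0 := by
  have e1 : Complex.exp (-r * h) * Complex.exp ((r - α) * h) = Complex.exp (-(α : ℂ) * h) := by
    rw [← Complex.exp_add]
    ring_nf
  have key : ((r - (α : ℂ)) * h) * Complex.exp ((r - α) * h)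
      = ((β : ℂ) * h) * Complex.exp (-(α : ℂ) * h) := by
    rw [← e1, hr]
    ring
  have hre := congrArg Complex.re key
  have him := congrArg Complex.im key
  simp [Complex.mul_re, Complex.mul_im, Complex.exp_re, Complex.exp_im] at hre him
  constructor
  · linear_combination hre
  · have hE : Real.exp ((r.re - α) * h) ≠ 0 := Real.exp_ne_zero _
    have h2 : Real.exp ((r.re - α) * h)
        * (((r.re - α) * h) * Real.sin (r.im * h) + (r.im * h) * Real.cos (r.im * h)) = 0 := by
      linear_combination him
    exact (mul_eq_zero.1 h2).resolve_left hE


/-- Rightmostness of the assigned complex eigenvalue: if `h > 0` and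
`S = u + i·v` with `0 < v·h < π` and `u − α = −v·cot(v·h)` (so `(S−α)h` lies on
the upper boundary of the range of the principal branch `W₀`) solves the
characteristic equation `S − α = β·e^{−S·h}`, then every complex solution `s`
of the characteristic equation satisfies `Re(s) ≤ u`. -/
theorem complex_root_is_rightmost (h α β u v : ℝ) (hh : 0 < h)
    (hv1 : 0 < v * h) (hv2 : v * h < Real.pi)
    (hu : u - α = -v * Real.cot (v * h))
    (hS : ((u : ℂ) + (v : ℂ) * Complex.I) - (α : ℂ) =
        (β : ℂ) * Complex.exp (-((u : ℂ) + (v : ℂ) * Complex.I) * (h : ℂ))) :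
    ∀ s : ℂ, s - (α : ℂ) = (β : ℂ) * Complex.exp (-s * (h : ℂ)) → s.re ≤ u := by
  intro s hs
  obtain ⟨a1re, a1im⟩ := root_eqs ((u : ℂ) + (v : ℂ) * Complex.I) hS
  simp only [Complex.add_re, Complex.add_im, Complex.ofReal_re, Complex.ofReal_im,
    Complex.mul_re, Complex.mul_im, Complex.I_re, Complex.I_im, mul_zero, mul_one,
    zero_mul, sub_zero, add_zero, zero_add, zero_sub, neg_zero] at a1re a1im
  obtain ⟨a2re, a2im⟩ := root_eqs s hs
  set D : ℝ := β * h * Real.exp (-(α * h)) with hD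
  have h1mem : v * h ∈ Set.Ioo 0 π := ⟨hv1, hv2⟩
  have e1re : Real.exp ((u - α) * h) * (((u - α) * h) * Real.cos (v * h)
      - (v * h) * Real.sin (v * h)) = -(-D) := by rw [neg_neg]; exact a1re
  have e2re : Real.exp ((s.re - α) * h) * (((s.re - α) * h) * Real.cos (s.im * h)
      - (s.im * h) * Real.sin (s.im * h)) = -(-D) := by rw [neg_neg]; exact a2re
  have hfin : (s.re - α) * h ≤ (u - α) * h := by
    rcases le_or_gt 0 (s.im * h) with hsn | hsn
    · exact key_real (-D) _ _ _ _ h1mem hsn e1re a1im e2re a2im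
    · have e2re' : Real.exp ((s.re - α) * h) * (((s.re - α) * h) * Real.cos (-(s.im * h))
          - (-(s.im * h)) * Real.sin (-(s.im * h))) = -(-D) := by
        rw [Real.cos_neg, Real.sin_neg, neg_neg]
        linear_combination a2re
      have e2im' : ((s.re - α) * h) * Real.sin (-(s.im * h))
          + (-(s.im * h)) * Real.cos (-(s.im * h)) = 0 := by
        rw [Real.cos_neg, Real.sin_neg]
        linear_combination -a2im
      exact key_real (-D) _ _ _ _ h1mem (by linarith) e1re a1im e2re' e2im'
  have := (mul_le_mul_iff_of_pos_right hh).1 hfin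
  linarith
end
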